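/- Let O ⊆ ℝⁿ be an open convex set, F : O → ℝⁿ a C¹ vector field whose flow φ_t is defined for all t ≥ 0 on O, and C ⊆ ℝⁿ a 2-solid cone of rank 2. If the system x' = F(x) is C-cooperative on O, then the flow φ_t is strongly monotone with respect to C: for all p, q ∈ O, if q − p ∈ C and t ≥ 0 then φ_t(q) − φ_t(p) ∈ C, and if moreover p ≠ q and t > 0 then φ_t(q) − φ_t(p) ∈ Int C. -/

import Mathlib

open Set MeasureTheory intervalIntegral Filter Topology

noncomputable section

variable {E : Type*} [NormedAddCommGroup E] [NormedSpace ℝ E] [CompleteSpace E]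

/-- auxiliary: any derivative works within a singleton. -/
lemma hasDerivWithinAt_singleton' (f : ℝ → E) (x : ℝ) (d : E) :
    HasDerivWithinAt f d {x} x := by
  rw [HasDerivWithinAt, hasDerivAtFilter_iff_isLittleO, nhdsWithin_singleton,
    Filter.prod_pure_pure, Asymptotics.isLittleO_pure]
  simp

/-- Solution predicate on `[0, T]`. -/
def SolOn (A : ℝ → E →L[ℝ] E) (x₀ : E) (T : ℝ) (f : ℝ → E) : Prop :=
  f 0 = x₀ ∧ ∀ t ∈ Icc (0:ℝ) T, HasDerivWithinAt f (A t (f t)) (Icc (0:ℝ) T) t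

lemma SolOn.continuousOn {A : ℝ → E →L[ℝ] E} {x₀ : E} {T : ℝ} {f : ℝ → E}
    (h : SolOn A x₀ T f) : ContinuousOn f (Icc 0 T) :=
  fun t ht => (h.2 t ht).continuousWithinAt

lemma SolOn.hasDerivWithinAt_Ici {A : ℝ → E →L[ℝ] E} {x₀ : E} {T : ℝ} {f : ℝ → E}
    (h : SolOn A x₀ T f) {t : ℝ} (ht : t ∈ Ico 0 T) :
    HasDerivWithinAt f (A t (f t)) (Ici t) t := by
  refine (h.2 t ⟨ht.1, ht.2.le⟩).mono_of_mem_nhdsWithin ?_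
  rw [mem_nhdsWithin]
  exact ⟨Iio T, isOpen_Iio, ht.2, fun s hs => ⟨le_trans ht.1 hs.2, hs.1.le⟩⟩

lemma solOn_unique {A : ℝ → E →L[ℝ] E} {x₀ : E} {T₁ T₂ : ℝ} (hT₁ : 0 ≤ T₁) (hT : T₁ ≤ T₂)
    (hA : ContinuousOn A (Icc 0 T₂)) {f g : ℝ → E}
    (hf : SolOn A x₀ T₁ f) (hg : SolOn A x₀ T₂ g) :
    EqOn f g (Icc 0 T₁) := by
  obtain ⟨M, hM⟩ := isCompact_Icc.exists_bound_of_continuousOn hA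
  have hT₂ : (0:ℝ) ≤ T₂ := hT₁.trans hT
  set c : ℝ → ℝ := fun t => max 0 (min t T₂) with hc
  have hcmem : ∀ t, c t ∈ Icc (0:ℝ) T₂ := fun t =>
    ⟨le_max_left _ _, max_le hT₂ (min_le_right _ _)⟩
  have hceq : ∀ t ∈ Icc (0:ℝ) T₂, c t = t := fun t ht => by
    simp [hc, min_eq_left ht.2, max_eq_right ht.1]
  set K : NNReal := ⟨max M 0, le_max_right _ _⟩ with hK
  have hLip : ∀ t : ℝ, LipschitzOnWith K (fun x => A (c t) x) univ := by
    intro t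
    refine ((A (c t)).lipschitz.weaken ?_).lipschitzOnWith
    rw [← NNReal.coe_le_coe]
    exact le_trans (hM _ (hcmem t)) (le_max_left _ _)
  have key := ODE_solution_unique_of_mem_Icc_right (v := fun t x => A (c t) x)
    (s := fun _ => (univ : Set E)) (K := K) (fun t _ => hLip t)
    (hf.continuousOn)
    (fun t ht => by
      show HasDerivWithinAt f (A (c t) (f t)) (Ici t) t
      rw [hceq t ⟨ht.1, ht.2.le.trans hT⟩]
      exact hf.hasDerivWithinAt_Ici ht)
    (fun t _ => mem_univ _)
    (hg.continuousOn.mono (Icc_subset_Icc_right hT))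
    (fun t ht => by
      show HasDerivWithinAt g (A (c t) (g t)) (Ici t) t
      rw [hceq t ⟨ht.1, ht.2.le.trans hT⟩]
      exact hg.hasDerivWithinAt_Ici ⟨ht.1, lt_of_lt_of_le ht.2 hT⟩)
    (fun t _ => mem_univ _)
    (hf.1.trans hg.1.symm)
  exact key

lemma solOn_exists {A : ℝ → E →L[ℝ] E} (hA : ContinuousOn A (Ici 0)) (x₀ : E) {T : ℝ}
    (hT : 0 ≤ T) : ∃ f : ℝ → E, SolOn A x₀ T f := by
  obtain ⟨M, hM⟩ := isCompact_Icc.exists_bound_of_continuousOn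
    (hA.mono (Icc_subset_Ici_self : Icc (0:ℝ) T ⊆ Ici 0))
  set L : ℝ := max M 0 with hL
  have hL0 : 0 ≤ L := le_max_right _ _
  have hAle : ∀ t ∈ Icc (0:ℝ) T, ‖A t‖ ≤ L := fun t ht => (hM t ht).trans (le_max_left _ _)
  set B : ℝ := ‖x₀‖ * Real.exp (L * T) with hB
  have hB0 : 0 ≤ B := mul_nonneg (norm_nonneg _) (Real.exp_pos _).le
  set Cb : ℝ := L * (B + 1) with hCb
  have hCb0 : 0 ≤ Cb := mul_nonneg hL0 (by linarith)
  set δ : ℝ := 1 / (Cb + 1) with hδ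
  have hδ0 : 0 < δ := by positivity
  -- a priori bound
  have apriori : ∀ c ∈ Icc (0:ℝ) T, ∀ f : ℝ → E, SolOn A x₀ c f → ‖f c‖ ≤ B := by
    intro c hc f hf
    have := norm_le_gronwallBound_of_norm_deriv_right_le (f := f)
      (f' := fun t => A t (f t)) (δ := ‖x₀‖) (K := L) (ε := 0) (a := 0) (b := c)
      hf.continuousOn (fun t ht => hf.hasDerivWithinAt_Ici ht)
      (by rw [hf.1])
      (fun t ht => by
        have h1 : ‖A t (f t)‖ ≤ ‖A t‖ * ‖f t‖ := (A t).le_opNorm _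
        have h2 : ‖A t‖ ≤ L := hAle t ⟨ht.1, ht.2.le.trans hc.2⟩
        have := mul_le_mul_of_nonneg_right h2 (norm_nonneg (f t))
        linarith)
    have hfc := this c ⟨hc.1, le_rfl⟩
    rw [gronwallBound_ε0, sub_zero] at hfc
    refine hfc.trans ?_
    have : Real.exp (L * c) ≤ Real.exp (L * T) :=
      Real.exp_le_exp.2 (mul_le_mul_of_nonneg_left hc.2 hL0)
    exact mul_le_mul_of_nonneg_left this (norm_nonneg _)
  -- induction
  have main : ∀ k : ℕ, ∃ f : ℝ → E, SolOn A x₀ (min (k * δ) T) f := by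
    intro k
    induction k with
    | zero =>
      refine ⟨fun _ => x₀, rfl, ?_⟩
      intro t ht
      have h0 : min ((0:ℕ) * δ) T = 0 := by simp [hT]
      rw [h0] at ht ⊢
      rw [Icc_self] at ht ⊢
      rw [mem_singleton_iff] at ht
      subst ht
      exact hasDerivWithinAt_singleton' _ _ _
    | succ k ih =>
      obtain ⟨f, hf⟩ := ih
      set c : ℝ := min (k * δ) T with hcdef
      set c' : ℝ := min ((k + 1 : ℕ) * δ) T with hc'def
      have hc0 : 0 ≤ c := le_min (mul_nonneg (Nat.cast_nonneg _) hδ0.le) hT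
      have hcc' : c ≤ c' := min_le_min (by push_cast; nlinarith [hδ0.le]) le_rfl
      have hc'T : c' ≤ T := min_le_right _ _
      have hcT : c ≤ T := min_le_right _ _
      have hc'cδ : c' ≤ c + δ := by
        rcases le_total ((k:ℝ) * δ) T with h | h
        · calc c' ≤ (k + 1 : ℕ) * δ := min_le_left _ _
            _ = c + δ := by rw [hcdef, min_eq_left h]; push_cast; ring
        · calc c' ≤ T := min_le_right _ _
            _ = c := by rw [hcdef, min_eq_right h]
            _ ≤ c + δ := by linarith
      have hBfc : ‖f c‖ ≤ B := apriori c ⟨hc0, hcT⟩ f hf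
      set K : NNReal := ⟨L, hL0⟩ with hKdef
      have hpl : IsPicardLindelof (fun t (x : E) => A t x) (⟨c, le_rfl, hcc'⟩ : Icc c c')
          (f c) 1 0 ⟨Cb, hCb0⟩ K := by
        constructor
        · intro t ht
          refine ((A t).lipschitz.weaken ?_).lipschitzOnWith
          rw [← NNReal.coe_le_coe]
          exact hAle t ⟨hc0.trans ht.1, ht.2.trans hc'T⟩
        · intro x _
          exact (ContinuousLinearMap.apply ℝ E x).continuous.comp_continuousOn
            (hA.mono (fun s hs => hc0.trans hs.1))
        · intro t ht x hx
          have h1 : ‖A t x‖ ≤ ‖A t‖ * ‖x‖ := (A t).le_opNorm _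
          have h2 : ‖A t‖ ≤ L := hAle t ⟨hc0.trans ht.1, ht.2.trans hc'T⟩
          have h3 : ‖x‖ ≤ B + 1 := by
            have h4 : ‖x - f c‖ ≤ 1 := by simpa using mem_closedBall_iff_norm.1 hx
            have h5 : ‖x‖ - ‖f c‖ ≤ ‖x - f c‖ := norm_sub_norm_le _ _
            linarith
          calc ‖A t x‖ ≤ ‖A t‖ * ‖x‖ := h1
            _ ≤ L * (B + 1) := mul_le_mul h2 h3 (norm_nonneg _) hL0
        · have h1 : max (c' - c) (c - c) = c' - c := by
            rw [max_eq_left]; linarith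
          change Cb * max (c' - c) (c - c) ≤ _
          rw [h1]
          refine le_trans (b := (1:ℝ)) ?_ (by norm_num)
          calc Cb * (c' - c) ≤ Cb * δ := mul_le_mul_of_nonneg_left (by linarith) hCb0
            _ ≤ 1 := by
                rw [hδ, mul_one_div, div_le_one (by linarith)]
                linarith
      obtain ⟨g, hgc, hg⟩ := hpl.exists_eq_forall_mem_Icc_hasDerivWithinAt₀
      replace hgc : g c = f c := hgc
      refine ⟨fun t => if t ≤ c then f t else g t, ?_, ?_⟩
      · simp only [if_pos hc0, hf.1]
      · intro t ht
        rcases lt_trichotomy t c with htc | htc | htc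
        · have hev : ∀ᶠ s in 𝓝 t, (if s ≤ c then f s else g s) = f s := by
            filter_upwards [Iio_mem_nhds htc] with s hs
            rw [if_pos (le_of_lt hs)]
          have H1 : HasDerivWithinAt f (A t (f t)) (Icc 0 c') t := by
            refine (hf.2 t ⟨ht.1, htc.le⟩).mono_of_mem_nhdsWithin ?_
            rw [mem_nhdsWithin]
            exact ⟨Iio c, isOpen_Iio, htc, fun s hs => ⟨hs.2.1, hs.1.le⟩⟩
          show HasDerivWithinAt (fun s => if s ≤ c then f s else g s)
            (A t (if t ≤ c then f t else g t)) (Icc 0 c') t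
          rw [if_pos htc.le]
          exact H1.congr_of_eventuallyEq (hev.filter_mono nhdsWithin_le_nhds)
            (if_pos htc.le)
        · have h1 : HasDerivWithinAt (fun s => if s ≤ c then f s else g s)
              (A c (f c)) (Icc 0 c) c := by
            refine (hf.2 c ⟨hc0, le_rfl⟩).congr ?_ (if_pos le_rfl)
            intro s hs; exact if_pos hs.2
          have h2 : HasDerivWithinAt (fun s => if s ≤ c then f s else g s)
              (A c (f c)) (Icc c c') c := by
            have h2' := hg c ⟨le_rfl, hcc'⟩
            rw [hgc] at h2'
            refine h2'.congr ?_ ((if_pos le_rfl).trans hgc.symm)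
            intro s hs
            by_cases hst : s ≤ c
            · have hsc : s = c := le_antisymm hst hs.1
              subst hsc
              simp [hgc]
            · exact if_neg hst
          have h3 := h1.union h2
          rw [Icc_union_Icc_eq_Icc hc0 hcc'] at h3
          subst htc
          show HasDerivWithinAt (fun s => if s ≤ c then f s else g s)
            (A c (if c ≤ c then f c else g c)) (Icc 0 c') c
          rw [if_pos le_rfl]
          exact h3
        · have hev : ∀ᶠ s in 𝓝 t, (if s ≤ c then f s else g s) = g s := by
            filter_upwards [Ioi_mem_nhds htc] with s hs
            rw [if_neg (not_le.2 hs)]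
          have H1 : HasDerivWithinAt g (A t (g t)) (Icc 0 c') t := by
            refine (hg t ⟨htc.le, ht.2⟩).mono_of_mem_nhdsWithin ?_
            rw [mem_nhdsWithin]
            exact ⟨Ioi c, isOpen_Ioi, htc, fun s hs => ⟨hs.1.le, hs.2.2⟩⟩
          show HasDerivWithinAt (fun s => if s ≤ c then f s else g s)
            (A t (if t ≤ c then f t else g t)) (Icc 0 c') t
          rw [if_neg (not_le.2 htc)]
          exact H1.congr_of_eventuallyEq (hev.filter_mono nhdsWithin_le_nhds)
            (if_neg (not_le.2 htc))
  obtain ⟨k, hk⟩ := exists_nat_ge (T / δ)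
  obtain ⟨f, hf⟩ := main k
  refine ⟨f, ?_⟩
  have : min ((k:ℝ) * δ) T = T := by
    rw [min_eq_right]
    rw [div_le_iff₀ hδ0] at hk
    linarith
  rwa [this] at hf

theorem exists_global_solution (A : ℝ → E →L[ℝ] E) (hA : ContinuousOn A (Ici 0)) (x₀ : E) :
    ∃ U : ℝ → E, U 0 = x₀ ∧ ∀ t : ℝ, 0 ≤ t → HasDerivAt U (A t (U t)) t := by
  choose g hg using fun k : ℕ => solOn_exists hA x₀ (Nat.cast_nonneg k)
  set U : ℝ → E := fun t => if 0 ≤ t then g (⌊t⌋₊ + 2) t else x₀ + t • (A 0 x₀) with hU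
  have hfloor : ∀ t : ℝ, 0 ≤ t → t ≤ ((⌊t⌋₊ + 2 : ℕ) : ℝ) := by
    intro t ht
    have := Nat.lt_floor_add_one t
    push_cast
    linarith
  have hco : ∀ t : ℝ, 0 ≤ t → ∀ k : ℕ, t ≤ (k : ℝ) → U t = g k t := by
    intro t ht k hk
    have h2 := hfloor t ht
    rw [hU]
    simp only [if_pos ht]
    rcases le_total (((⌊t⌋₊ + 2 : ℕ)) : ℝ) ((k : ℝ)) with h | h
    · exact solOn_unique (by positivity) h (hA.mono (Icc_subset_Ici_self))
        (hg _) (hg k) ⟨ht, h2⟩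
    · exact (solOn_unique (Nat.cast_nonneg k) h (hA.mono (Icc_subset_Ici_self))
        (hg k) (hg _) ⟨ht, hk⟩).symm
  have hU0 : U 0 = x₀ := by
    rw [hco 0 (le_refl (0:ℝ)) 2 (by norm_num)]
    exact (hg 2).1
  refine ⟨U, hU0, ?_⟩
  intro t ht
  rcases eq_or_lt_of_le ht with ht0 | ht0
  · subst ht0
    -- right derivative
    have hR : HasDerivWithinAt U (A 0 x₀) (Ici 0) 0 := by
      have H := (hg 2).2 0 ⟨le_rfl, by norm_num⟩
      rw [(hg 2).1] at H
      have H' : HasDerivWithinAt (g 2) (A 0 x₀) (Ici 0) 0 := by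
        refine H.mono_of_mem_nhdsWithin ?_
        rw [mem_nhdsWithin]
        exact ⟨Iio 2, isOpen_Iio, by norm_num, fun s hs => ⟨hs.2, by
          have := hs.1; norm_num at this ⊢; linarith⟩⟩
      refine H'.congr_of_eventuallyEq ?_ (by rw [hU0, (hg 2).1])
      rw [Filter.eventuallyEq_iff_exists_mem]
      refine ⟨Ici 0 ∩ Iio 2, ?_, ?_⟩
      · rw [mem_nhdsWithin]
        exact ⟨Iio 2, isOpen_Iio, by norm_num, fun s hs => ⟨hs.2, hs.1⟩⟩
      · intro s hs
        exact hco s hs.1 2 (by have := hs.2; norm_num at this ⊢; linarith)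
    have hL : HasDerivWithinAt U (A 0 x₀) (Iic 0) 0 := by
      have hl : HasDerivAt (fun s : ℝ => x₀ + s • (A 0 x₀)) (A 0 x₀) 0 := by
        simpa using ((hasDerivAt_id (0:ℝ)).smul_const (A 0 x₀)).const_add x₀
      refine (hl.hasDerivWithinAt).congr ?_ (by simp [hU0])
      intro s hs
      rcases lt_or_eq_of_le (mem_Iic.1 hs) with h | h
      · rw [hU]; simp only [if_neg (not_le.2 h)]
      · subst h; simp [hU0]
    have := hL.union hR
    rw [Iic_union_Ici, hasDerivWithinAt_univ] at this
    rwa [hU0]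
  · -- t > 0
    set k : ℕ := ⌊t⌋₊ + 2 with hk
    have htk : t < ((⌊t⌋₊ : ℝ) + 1) := Nat.lt_floor_add_one t
    have htk2 : t < (k : ℝ) := by rw [hk]; push_cast; linarith
    have hIcc := (hg k).2 t ⟨ht, htk2.le⟩
    have hDA : HasDerivAt (g k) (A t (g k t)) t :=
      hIcc.hasDerivAt (mem_of_superset (Ioo_mem_nhds ht0 htk2) Ioo_subset_Icc_self)
    have hev : U =ᶠ[𝓝 t] g k := by
      filter_upwards [Ioo_mem_nhds ht0 htk] with s hs
      exact hco s hs.1.le k (by rw [hk]; push_cast; linarith [hs.2])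
    have := hDA.congr_of_eventuallyEq hev
    rwa [hco t ht k htk2.le]

/-! ### Part 2: specifics for stmt7 -/

/-- `A_F^{pq}(t) = ∫₀¹ DF(s φ_t(p) + (1−s) φ_t(q)) ds`. -/
def lineA (n : ℕ) (F : (Fin n → ℝ) → (Fin n → ℝ))
    (φ : ℝ → (Fin n → ℝ) → (Fin n → ℝ)) (p q : Fin n → ℝ) (t : ℝ) :
    (Fin n → ℝ) →L[ℝ] (Fin n → ℝ) :=
  ∫ s in (0:ℝ)..1, fderiv ℝ F (s • φ t p + (1 - s) • φ t q)

/-- `U` is the fundamental solution of `dU/dt = A(t) U`, `U(0) = I` (for `t ≥ 0`). -/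
def IsFundamental (n : ℕ) (A U : ℝ → (Fin n → ℝ) →L[ℝ] (Fin n → ℝ)) : Prop :=
  U 0 = ContinuousLinearMap.id ℝ (Fin n → ℝ) ∧
    ∀ t : ℝ, 0 ≤ t → HasDerivAt U ((A t).comp (U t)) t

def clamp01 (s : ℝ) : ℝ := max 0 (min s 1)

lemma clamp01_mem (s : ℝ) : clamp01 s ∈ Icc (0:ℝ) 1 :=
  ⟨le_max_left _ _, max_le (by norm_num) (min_le_right _ _)⟩

lemma clamp01_eq {s : ℝ} (hs : s ∈ Icc (0:ℝ) 1) : clamp01 s = s := by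
  simp [clamp01, min_eq_left hs.2, max_eq_right hs.1]

lemma continuous_clamp01 : Continuous clamp01 :=
  continuous_const.max (continuous_id.min continuous_const)

section Main

variable {n : ℕ} {O : Set (Fin n → ℝ)} {F : (Fin n → ℝ) → (Fin n → ℝ)}
  {φ : ℝ → (Fin n → ℝ) → (Fin n → ℝ)} {p q : Fin n → ℝ}

/-- Mean value identity. -/
lemma lineA_apply_sub (hO : IsOpen O) (hOconv : Convex ℝ O) (hF : ContDiffOn ℝ 1 F O)
    {x y : Fin n → ℝ} (hx : x ∈ O) (hy : y ∈ O) :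
    (∫ s in (0:ℝ)..1, fderiv ℝ F (s • x + (1 - s) • y)) (y - x) = F y - F x := by
  have hdfO : ContinuousOn (fderiv ℝ F) O := hF.continuousOn_fderiv_of_isOpen hO le_rfl
  set ℓ : ℝ → (Fin n → ℝ) := fun s => s • x + (1 - s) • y with hℓdef
  have hℓO : ∀ s ∈ Icc (0:ℝ) 1, ℓ s ∈ O := fun s hs =>
    hOconv hx hy hs.1 (by linarith [hs.2]) (by ring)
  have hℓcont : Continuous ℓ := by
    apply Continuous.add
    · exact (continuous_id.smul continuous_const)
    · exact ((continuous_const.sub continuous_id).smul continuous_const)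
  have hℓd : ∀ s : ℝ, HasDerivAt ℓ (x - y) s := by
    intro s
    have heq : ℓ = fun s : ℝ => y + s • (x - y) := by
      funext s; simp only [hℓdef, smul_sub, sub_smul, one_smul]; abel
    rw [heq]
    simpa using ((hasDerivAt_id s).smul_const (x - y)).const_add y
  have hFd : ∀ s ∈ uIcc (0:ℝ) 1,
      HasDerivAt (fun s => F (ℓ s)) (fderiv ℝ F (ℓ s) (x - y)) s := by
    intro s hs
    rw [uIcc_of_le (by norm_num)] at hs
    have hdiff : DifferentiableAt ℝ F (ℓ s) :=
      (hF.differentiableOn one_ne_zero).differentiableAt (hO.mem_nhds (hℓO s hs))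
    exact hdiff.hasFDerivAt.comp_hasDerivAt s (hℓd s)
  have hBcont : ContinuousOn (fun s => fderiv ℝ F (ℓ s)) (Icc (0:ℝ) 1) :=
    hdfO.comp hℓcont.continuousOn hℓO
  have hBint : IntervalIntegrable (fun s => fderiv ℝ F (ℓ s)) volume 0 1 := by
    apply ContinuousOn.intervalIntegrable
    rwa [uIcc_of_le (by norm_num)]
  have hint : IntervalIntegrable (fun s => fderiv ℝ F (ℓ s) (x - y)) volume 0 1 := by
    apply ContinuousOn.intervalIntegrable
    rw [uIcc_of_le (by norm_num)]
    exact (ContinuousLinearMap.apply ℝ (Fin n → ℝ) (x - y)).continuous.comp_continuousOn hBcont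
  have hFTC := intervalIntegral.integral_eq_sub_of_hasDerivAt hFd hint
  have happly : (∫ s in (0:ℝ)..1, fderiv ℝ F (ℓ s)) (x - y)
      = ∫ s in (0:ℝ)..1, fderiv ℝ F (ℓ s) (x - y) := by
    rw [intervalIntegral.integral_of_le (by norm_num : (0:ℝ) ≤ 1),
      intervalIntegral.integral_of_le (by norm_num : (0:ℝ) ≤ 1)]
    exact ContinuousLinearMap.integral_apply hBint.1 (x - y)
  have hl1 : ℓ 1 = x := by simp [hℓdef]
  have hl0 : ℓ 0 = y := by simp [hℓdef]
  have key : (∫ s in (0:ℝ)..1, fderiv ℝ F (ℓ s)) (x - y) = F x - F y := by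
    rw [happly, hFTC, hl1, hl0]
  calc (∫ s in (0:ℝ)..1, fderiv ℝ F (ℓ s)) (y - x)
      = -((∫ s in (0:ℝ)..1, fderiv ℝ F (ℓ s)) (x - y)) := by
        rw [← map_neg, neg_sub]
    _ = F y - F x := by rw [key]; abel

lemma lineA_continuousOn (hO : IsOpen O) (hOconv : Convex ℝ O) (hF : ContDiffOn ℝ 1 F O)
    (hφO : ∀ x ∈ O, ∀ t : ℝ, 0 ≤ t → φ t x ∈ O)
    (hφcont : ∀ x ∈ O, ContinuousOn (fun t => φ t x) (Ici 0))
    (hp : p ∈ O) (hq : q ∈ O) :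
    ContinuousOn (lineA n F φ p q) (Ici 0) := by
  have hdfO : ContinuousOn (fderiv ℝ F) O := hF.continuousOn_fderiv_of_isOpen hO le_rfl
  rw [continuousOn_iff_continuous_restrict]
  have hcp : Continuous fun t : Ici (0:ℝ) => φ t p :=
    continuousOn_iff_continuous_restrict.mp (hφcont p hp)
  have hcq : Continuous fun t : Ici (0:ℝ) => φ t q :=
    continuousOn_iff_continuous_restrict.mp (hφcont q hq)
  have hinner : Continuous fun z : (Ici (0:ℝ)) × ℝ =>
      clamp01 z.2 • φ z.1 p + (1 - clamp01 z.2) • φ z.1 q := by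
    apply Continuous.add
    · exact (continuous_clamp01.comp continuous_snd).smul (hcp.comp continuous_fst)
    · exact ((continuous_const.sub (continuous_clamp01.comp continuous_snd)).smul
        (hcq.comp continuous_fst))
  have hmaps : ∀ z : (Ici (0:ℝ)) × ℝ,
      clamp01 z.2 • φ z.1 p + (1 - clamp01 z.2) • φ z.1 q ∈ O := by
    intro z
    have h1 := clamp01_mem z.2
    exact hOconv (hφO p hp z.1 z.1.2) (hφO q hq z.1 z.1.2) h1.1 (by linarith [h1.2]) (by ring)
  have hcont2 : Continuous fun z : (Ici (0:ℝ)) × ℝ =>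
      fderiv ℝ F (clamp01 z.2 • φ z.1 p + (1 - clamp01 z.2) • φ z.1 q) :=
    hdfO.comp_continuous hinner hmaps
  have hmain := continuous_parametric_intervalIntegral_of_continuous' (μ := volume)
    (f := fun (t : Ici (0:ℝ)) (s : ℝ) =>
      fderiv ℝ F (clamp01 s • φ t p + (1 - clamp01 s) • φ t q)) hcont2 0 1
  have heq : (Ici (0:ℝ)).restrict (lineA n F φ p q) = fun t : Ici (0:ℝ) =>
      ∫ s in (0:ℝ)..1, fderiv ℝ F (clamp01 s • φ t p + (1 - clamp01 s) • φ t q) := by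
    funext t
    apply intervalIntegral.integral_congr
    intro s hs
    rw [uIcc_of_le (by norm_num)] at hs
    show fderiv ℝ F (s • φ t p + (1 - s) • φ t q)
      = fderiv ℝ F (clamp01 s • φ t p + (1 - clamp01 s) • φ t q)
    rw [clamp01_eq hs]
  show Continuous ((Ici (0:ℝ)).restrict (lineA n F φ p q))
  rw [heq]
  exact hmain

end Main

/-- `C` is a cone of rank 2 in ℝⁿ. -/
def IsRank2Cone (n : ℕ) (C : Set (Fin n → ℝ)) : Prop :=
  C.Nonempty ∧ IsClosed C ∧ (∀ (α : ℝ), ∀ x ∈ C, α • x ∈ C) ∧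
  (∃ W : Submodule ℝ (Fin n → ℝ), Module.finrank ℝ W = 2 ∧ (W : Set (Fin n → ℝ)) ⊆ C) ∧
  (∀ W : Submodule ℝ (Fin n → ℝ), (W : Set (Fin n → ℝ)) ⊆ C → Module.finrank ℝ W ≤ 2)

/-- `C` is 2-solid. -/
def IsTwoSolid (n : ℕ) (C : Set (Fin n → ℝ)) : Prop :=
  ∃ W : Submodule ℝ (Fin n → ℝ), Module.finrank ℝ W = 2 ∧
    ∀ v ∈ W, v ≠ 0 → v ∈ interior C

/-- a `C`-cooperative system has a flow that is strongly monotone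
with respect to the 2-solid cone `C` of rank 2. -/
theorem stmt7 (n : ℕ) (O : Set (Fin n → ℝ)) (hO : IsOpen O) (hOconv : Convex ℝ O)
    (F : (Fin n → ℝ) → (Fin n → ℝ)) (hF : ContDiffOn ℝ 1 F O)
    (φ : ℝ → (Fin n → ℝ) → (Fin n → ℝ))
    (hφ0 : ∀ x ∈ O, φ 0 x = x)
    (hφO : ∀ x ∈ O, ∀ t : ℝ, 0 ≤ t → φ t x ∈ O)
    (hφd : ∀ x ∈ O, ∀ t : ℝ, 0 ≤ t → HasDerivAt (fun τ => φ τ x) (F (φ t x)) t)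
    (C : Set (Fin n → ℝ)) (hC : IsRank2Cone n C) (hCsolid : IsTwoSolid n C)
    (hcoop : ∀ p ∈ O, ∀ q ∈ O, ∀ U, IsFundamental n (lineA n F φ p q) U →
      ∀ t : ℝ, 0 < t → ∀ v ∈ C, v ≠ 0 → U t v ∈ interior C) :
    ∀ p ∈ O, ∀ q ∈ O, q - p ∈ C →
      (∀ t : ℝ, 0 ≤ t → φ t q - φ t p ∈ C) ∧
      (p ≠ q → ∀ t : ℝ, 0 < t → φ t q - φ t p ∈ interior C) := by
  intro p hp q hq hpq
  have h0C : (0 : Fin n → ℝ) ∈ C := by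
    obtain ⟨x, hx⟩ := hC.1
    simpa using hC.2.2.1 0 x hx
  by_cases hpq' : p = q
  · subst hpq'
    exact ⟨fun t _ => by simpa using h0C, fun hne => absurd rfl hne⟩
  have hvne : q - p ≠ 0 := sub_ne_zero.2 (Ne.symm hpq')
  have hφcont : ∀ x ∈ O, ContinuousOn (fun t => φ t x) (Ici 0) :=
    fun x hx t ht => ((hφd x hx t ht).continuousAt).continuousWithinAt
  have hAcont : ContinuousOn (lineA n F φ p q) (Ici 0) :=
    lineA_continuousOn hO hOconv hF hφO hφcont hp hq
  set A : ℝ → (Fin n → ℝ) →L[ℝ] (Fin n → ℝ) := lineA n F φ p q with hAdef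
  set 𝕃 : ℝ → ((Fin n → ℝ) →L[ℝ] (Fin n → ℝ)) →L[ℝ] ((Fin n → ℝ) →L[ℝ] (Fin n → ℝ)) :=
    fun t => ContinuousLinearMap.compL ℝ (Fin n → ℝ) (Fin n → ℝ) (Fin n → ℝ) (A t) with h𝕃def
  have h𝕃cont : ContinuousOn 𝕃 (Ici 0) :=
    (ContinuousLinearMap.compL ℝ (Fin n → ℝ) (Fin n → ℝ)
      (Fin n → ℝ)).continuous.comp_continuousOn hAcont
  obtain ⟨U, hU0, hUd⟩ := exists_global_solution 𝕃 h𝕃cont (ContinuousLinearMap.id ℝ _)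
  have hUd' : ∀ t : ℝ, 0 ≤ t → HasDerivAt U ((A t).comp (U t)) t := by
    intro t ht
    simpa [h𝕃def, ContinuousLinearMap.compL_apply] using hUd t ht
  have hUfund : IsFundamental n (lineA n F φ p q) U := ⟨hU0, hUd'⟩
  set w : ℝ → (Fin n → ℝ) := fun t => U t (q - p) with hwdef
  set v : ℝ → (Fin n → ℝ) := fun t => φ t q - φ t p with hvdef
  have hwd : ∀ t : ℝ, 0 ≤ t → HasDerivAt w (A t (w t)) t := by
    intro t ht
    have h := (hUd' t ht).clm_apply (hasDerivAt_const t (q - p))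
    simp only [ContinuousLinearMap.comp_apply, map_zero, add_zero] at h
    exact h
  have hvd : ∀ t : ℝ, 0 ≤ t → HasDerivAt v (A t (v t)) t := by
    intro t ht
    have h1 := (hφd q hq t ht).sub (hφd p hp t ht)
    have h2 : A t (v t) = F (φ t q) - F (φ t p) := by
      show (lineA n F φ p q t) (φ t q - φ t p) = _
      simp only [lineA]
      exact lineA_apply_sub hO hOconv hF (hφO p hp t ht) (hφO q hq t ht)
    rw [h2]
    exact h1
  have hweq : ∀ t : ℝ, 0 ≤ t → U t (q - p) = φ t q - φ t p := by
    intro T hT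
    have hwS : SolOn A (q - p) T w := by
      refine ⟨by simp [hwdef, hU0], fun t ht => (hwd t ht.1).hasDerivWithinAt⟩
    have hvS : SolOn A (q - p) T v := by
      refine ⟨by simp [hvdef, hφ0 p hp, hφ0 q hq], fun t ht => (hvd t ht.1).hasDerivWithinAt⟩
    exact solOn_unique hT le_rfl (hAcont.mono Icc_subset_Ici_self) hwS hvS ⟨hT, le_rfl⟩
  constructor
  · intro t ht
    rcases eq_or_lt_of_le ht with h | h
    · rw [← h, hφ0 p hp, hφ0 q hq]
      exact hpq
    · have hmem := hcoop p hp q hq U hUfund t h (q - p) hpq hvne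
      rw [hweq t ht] at hmem
      exact interior_subset hmem
  · intro _ t ht
    have hmem := hcoop p hp q hq U hUfund t ht (q - p) hpq hvne
    rwa [hweq t ht.le] at hmem
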